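/- If a ring R is right almost perfect and R is not a prime ring, then R is right perfect. -/

import Mathlib

universe u

/-- A ring is *right perfect* if it satisfies the descending chain condition
on principal left ideals. -/
def IsRightPerfectRing (R : Type u) [Ring R] : Prop :=
  ∀ f : ℕ → R, (∀ n, Ideal.span {f (n + 1)} ≤ Ideal.span {f n}) →
    ∃ N, ∀ n, N ≤ n → Ideal.span {f n} = Ideal.span {f N}

/-- A ring is *right almost perfect* if `R/I` is right perfect for every
two-sided ideal `I` with `0 ≠ I ≠ R`. -/
def IsRightAlmostPerfectRing (R : Type u) [Ring R] : Prop :=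
  ∀ I : TwoSidedIdeal R, I ≠ ⊥ → I ≠ ⊤ → IsRightPerfectRing I.ringCon.Quotient

/-- A ring is *prime* if `I * J = 0` implies `I = 0` or `J = 0` for two-sided ideals. -/
def IsPrimeRing (R : Type u) [Ring R] : Prop :=
  ∀ I J : TwoSidedIdeal R, (∀ a ∈ I, ∀ b ∈ J, a * b = 0) → I = ⊥ ∨ J = ⊥

section Aux

variable {R : Type u} [Ring R]

private lemma mem_span_self' (a : R) : a ∈ Ideal.span {a} :=
  Ideal.subset_span rfl

private lemma span_anti {f : ℕ → R}
    (hf : ∀ n, Ideal.span {f (n + 1)} ≤ Ideal.span {f n}) :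
    ∀ m n, m ≤ n → Ideal.span {f n} ≤ Ideal.span {f m} := by
  intro m n h
  induction n, h using Nat.le_induction with
  | base => exact le_rfl
  | succ n hmn ih => exact (hf n).trans ih

/-- Key helper: any descending principal chain stabilizes modulo a nonzero proper
two-sided ideal, with explicit coefficients. -/
private lemma stab_mod (h1 : IsRightAlmostPerfectRing R)
    (K : TwoSidedIdeal R) (hbot : K ≠ ⊥) (htop : K ≠ ⊤)
    (f : ℕ → R) (hf : ∀ n, Ideal.span {f (n + 1)} ≤ Ideal.span {f n}) :
    ∃ M, ∀ n, M ≤ n → ∃ k : R, f M - k * f n ∈ K := by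
  have hperf := h1 K hbot htop
  set Q := K.ringCon.Quotient
  have hchain : ∀ n, Ideal.span {((f (n+1) : R) : Q)} ≤ Ideal.span {((f n : R) : Q)} := by
    intro n
    rw [Ideal.span_le, Set.singleton_subset_iff]
    obtain ⟨c, hc⟩ := Submodule.mem_span_singleton.mp (hf n (mem_span_self' _))
    refine Submodule.mem_span_singleton.mpr ⟨(c : Q), ?_⟩
    rw [smul_eq_mul, ← RingCon.coe_mul]
    rw [smul_eq_mul] at hc
    rw [hc]
  obtain ⟨M, hM⟩ := hperf (fun n => ((f n : R) : Q)) hchain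
  refine ⟨M, fun n hn => ?_⟩
  have hmem : ((f M : R) : Q) ∈ Ideal.span {((f n : R) : Q)} := by
    have := hM n hn
    rw [this]
    exact mem_span_self' _
  obtain ⟨q, hq⟩ := Submodule.mem_span_singleton.mp hmem
  obtain ⟨k, rfl⟩ := Quotient.mk''_surjective q
  refine ⟨k, ?_⟩
  rw [← TwoSidedIdeal.rel_iff]
  rw [← RingCon.eq (c := K.ringCon)]
  have hq : ((k : R) : Q) * ((f n : R) : Q) = ((f M : R) : Q) := hq
  rw [RingCon.coe_mul]
  exact hq.symm

end Aux

theorem stmt0 {R : Type u} [Ring R] (h1 : IsRightAlmostPerfectRing R)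
    (h2 : ¬ IsPrimeRing R) : IsRightPerfectRing R := by
  rw [IsPrimeRing] at h2
  push_neg at h2
  obtain ⟨I, J, hIJ, hIbot, hJbot⟩ := h2
  have hex : ∀ (L : TwoSidedIdeal R), L ≠ ⊥ → ∃ z ∈ L, z ≠ (0 : R) := by
    intro L hL
    by_contra hc
    push_neg at hc
    refine hL (TwoSidedIdeal.ext fun z => ?_)
    rw [TwoSidedIdeal.mem_bot]
    exact ⟨fun hz => hc z hz, fun hz => hz ▸ L.zero_mem⟩
  obtain ⟨x, hxI, hx0⟩ := hex I hIbot
  obtain ⟨y, hyJ, hy0⟩ := hex J hJbot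
  have hxRy : ∀ r : R, x * r * y = 0 := fun r => by
    rw [mul_assoc]
    exact hIJ x hxI (r * y) (J.mul_mem_left r y hyJ)
  intro f hf
  -- The ideal Y = right annihilator of xR
  set Y : TwoSidedIdeal R := TwoSidedIdeal.mk' {z | ∀ r : R, x * r * z = 0}
    (fun r => by simp)
    (fun {a b} ha hb r => by rw [mul_add, ha r, hb r, add_zero])
    (fun {a} ha r => by rw [mul_neg, ha r, neg_zero])
    (fun {s a} ha r => by
      rw [show x * r * (s * a) = x * (r * s) * a by rw [mul_assoc, mul_assoc, mul_assoc]]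
      exact ha (r * s))
    (fun {a s} ha r => by rw [← mul_assoc, ha r, zero_mul]) with hYdef
  have hymem : y ∈ Y := by
    rw [hYdef, TwoSidedIdeal.mem_mk']
    exact fun r => hxRy r
  have hYbot : Y ≠ ⊥ := by
    intro h
    exact hy0 ((TwoSidedIdeal.mem_bot (R:=R)).mp (h ▸ hymem))
  have hYtop : Y ≠ ⊤ := by
    intro h
    have h1mem : (1 : R) ∈ Y := h ▸ (TwoSidedIdeal.mem_top (R:=R))
    rw [hYdef, TwoSidedIdeal.mem_mk'] at h1mem
    have := h1mem 1
    rw [mul_one, mul_one] at this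
    exact hx0 this
  obtain ⟨M, hM⟩ := stab_mod h1 Y hYbot hYtop f hf
  -- key property of x
  have hxkey : ∀ (r : R) (n : ℕ), M ≤ n → x * r * f M ∈ Ideal.span {f n} := by
    intro r n hn
    obtain ⟨k, hk⟩ := hM n hn
    rw [hYdef, TwoSidedIdeal.mem_mk'] at hk
    have h0 : x * r * (f M - k * f n) = 0 := hk r
    rw [mul_sub] at h0
    have : x * r * f M = x * r * (k * f n) := by
      have := sub_eq_zero.mp h0
      exact this
    rw [this, ← mul_assoc]
    exact Submodule.mem_span_singleton.mpr ⟨x * r * k, by rw [smul_eq_mul]⟩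
  by_cases hstab : ∀ n, M ≤ n → f M ∈ Ideal.span {f n}
  · refine ⟨M, fun n hn => ?_⟩
    refine le_antisymm (span_anti hf M n hn) ?_
    rw [Ideal.span_le, Set.singleton_subset_iff]
    exact hstab n hn
  · push_neg at hstab
    obtain ⟨n₀, hn₀M, hn₀⟩ := hstab
    -- the ideal Z
    set Z : TwoSidedIdeal R := TwoSidedIdeal.mk'
      {c | ∀ (r : R) (n : ℕ), M ≤ n → c * r * f M ∈ Ideal.span {f n}}
      (fun r n hn => by simp)
      (fun {a b} ha hb r n hn => by
        rw [add_mul, add_mul]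
        exact Submodule.add_mem _ (ha r n hn) (hb r n hn))
      (fun {a} ha r n hn => by
        rw [neg_mul, neg_mul]
        exact Submodule.neg_mem _ (ha r n hn))
      (fun {s a} ha r n hn => by
        rw [show s * a * r * f M = s * (a * r * f M) by rw [mul_assoc, mul_assoc, mul_assoc]]
        exact Submodule.smul_mem _ s (ha r n hn))
      (fun {a s} ha r n hn => by
        rw [show a * s * r * f M = a * (s * r) * f M by rw [mul_assoc a s r]]
        exact ha (s * r) n hn) with hZdef
  -- x ∈ Z
    have hxZ : x ∈ Z := by
      rw [hZdef, TwoSidedIdeal.mem_mk']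
      exact fun r n hn => hxkey r n hn
    have hZbot : Z ≠ ⊥ := by
      intro h
      exact hx0 ((TwoSidedIdeal.mem_bot (R:=R)).mp (h ▸ hxZ))
    have hZtop : Z ≠ ⊤ := by
      intro h
      have h1mem : (1 : R) ∈ Z := h ▸ (TwoSidedIdeal.mem_top (R:=R))
      rw [hZdef, TwoSidedIdeal.mem_mk'] at h1mem
      have := h1mem 1 n₀ hn₀M
      rw [one_mul, one_mul] at this
      exact hn₀ this
    -- multipliers
    have hs : ∀ n, ∃ s : R, s * f n = f (n + 1) := by
      intro n
      obtain ⟨c, hc⟩ := Submodule.mem_span_singleton.mp (hf n (mem_span_self' _))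
      exact ⟨c, by rw [← smul_eq_mul]; exact hc⟩
    choose s hs using hs
    -- products
    set G : ℕ → R := fun k => Nat.rec (1 : R) (fun k g => s (M + k) * g) k with hGdef
    have hGsucc : ∀ k, G (k + 1) = s (M + k) * G k := fun k => rfl
    have hGf : ∀ k, f (M + k) = G k * f M := by
      intro k
      induction k with
      | zero => simp [hGdef]
      | succ k ih =>
        rw [hGsucc, mul_assoc, ← ih, hs (M + k), Nat.add_assoc]
    have hGchain : ∀ k, Ideal.span {G (k + 1)} ≤ Ideal.span {G k} := by
      intro k
      rw [Ideal.span_le, Set.singleton_subset_iff, hGsucc]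
      exact Submodule.mem_span_singleton.mpr ⟨s (M + k), by rw [smul_eq_mul]⟩
    obtain ⟨K, hK⟩ := stab_mod h1 Z hZbot hZtop G hGchain
    refine ⟨M + K, fun n hn => ?_⟩
    refine le_antisymm (span_anti hf (M + K) n hn) ?_
    rw [Ideal.span_le, Set.singleton_subset_iff]
    -- show f (M + K) ∈ span {f n}
    obtain ⟨k, hk⟩ := hK (n - M) (by omega)
    rw [hZdef, TwoSidedIdeal.mem_mk'] at hk
    have hkey := hk 1 n (by omega)
    rw [mul_one] at hkey
    have hnM : M + (n - M) = n := by omega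
    have hfn : G (n - M) * f M = f n := by rw [← hGf, hnM]
    have : f (M + K) = (G K - k * G (n - M)) * f M + k * f n := by
      rw [hGf K, sub_mul, mul_assoc, hfn]
      abel
    rw [this]
    refine Submodule.add_mem _ hkey ?_
    exact Submodule.mem_span_singleton.mpr ⟨k, by rw [smul_eq_mul]⟩
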